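/- Let f = ∇φ with φ ∈ L²(Ω) and let (u_h, p_h) solve the modified scheme with λ ≠ ∞. Then the energy identity 2μ (ε(u_h), ε(u_h))_{L²} + λ (π^{L²}∇·u_h, π^{L²}∇·u_h)_{L²} = −(π^{L²}φ, π^{L²}∇·u_h)_{L²} holds, and consequently 2μ ‖ε(u_h)‖²_{L²} + λ ‖π^{L²}∇·u_h‖²_{L²} ≤ ‖φ‖_{L²} ‖π^{L²}∇·u_h‖_{L²}. -/

import Mathlib

open scoped RealInnerProductSpace BigOperators

/-- Energy identity (3.13)/(3.14): for `f = ∇φ` and the modified scheme,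
`2μ (ε(u_h), ε(u_h)) + λ (π^{L²}∇·u_h, π^{L²}∇·u_h) = -(π^{L²}φ, π^{L²}∇·u_h)` and
`2μ ‖ε(u_h)‖² + λ ‖π^{L²}∇·u_h‖² ≤ ‖φ‖ ‖π^{L²}∇·u_h‖`. -/
theorem stmt11
    {V Q W E : Type*}
    [NormedAddCommGroup V] [InnerProductSpace ℝ V]
    [NormedAddCommGroup Q] [InnerProductSpace ℝ Q]
    [NormedAddCommGroup W] [InnerProductSpace ℝ W]
    [NormedAddCommGroup E] [InnerProductSpace ℝ E]
    (eps : V →ₗ[ℝ] E) (dvg : V →ₗ[ℝ] Q) (dvgW : W →ₗ[ℝ] Q) (zeroTrace : W → Prop)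
    (μ lam : ℝ) (hμ : 0 < μ) (hlam : 0 < lam)
    (Vh : Submodule ℝ V) (Qh : Submodule ℝ Q)
    (piL2 : Q →ₗ[ℝ] Q) (piDiv : V →ₗ[ℝ] W) (F : W →ₗ[ℝ] ℝ) (φ : Q) (uh : V) (ph : Q)
    -- π^{L²} is the L²-projection onto Q_h
    (hpiL2mem : ∀ q : Q, piL2 q ∈ Qh)
    (hpiL2orth : ∀ q : Q, ∀ qh ∈ Qh, ⟪ q - piL2 q, qh ⟫ = 0)
    -- commuting property, zero normal trace and ∇·(range π^div) ⊆ Q_h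
    (hcomm : ∀ vh ∈ Vh, ∀ qh ∈ Qh, ⟪ qh, dvgW (piDiv vh) ⟫ = ⟪ qh, dvg vh ⟫)
    (htrace : ∀ vh ∈ Vh, zeroTrace (piDiv vh))
    (hrange : ∀ vh ∈ Vh, dvgW (piDiv vh) ∈ Qh)
    -- f = ∇φ acting on zero-normal-trace fields by integration by parts
    (hgrad : ∀ z : W, zeroTrace z → F z = -⟪ φ, dvgW z ⟫)
    -- (u_h, p_h) solves the modified scheme
    (huh : uh ∈ Vh) (hph : ph ∈ Qh)
    (hscheme1 : ∀ vh ∈ Vh, 2 * μ * ⟪ eps uh, eps vh ⟫ + ⟪ ph, dvg vh ⟫ = F (piDiv vh))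
    (hscheme2 : ∀ qh ∈ Qh, ⟪ qh, dvg uh ⟫ - (1 / lam) * ⟪ ph, qh ⟫ = 0) :
    2 * μ * ⟪ eps uh, eps uh ⟫ + lam * ⟪ piL2 (dvg uh), piL2 (dvg uh) ⟫
        = -⟪ piL2 φ, piL2 (dvg uh) ⟫
    ∧ 2 * μ * ‖eps uh‖ ^ 2 + lam * ‖piL2 (dvg uh)‖ ^ 2
        ≤ ‖φ‖ * ‖piL2 (dvg uh)‖ := by
  set w := piL2 (dvg uh) with hw
  have hwQh : w ∈ Qh := hpiL2mem _
  -- projection identity: ⟪qh, dvg uh⟫ = ⟪qh, w⟫ for qh ∈ Qh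
  have hproj : ∀ qh ∈ Qh, ⟪ qh, dvg uh ⟫ = ⟪ qh, w ⟫ := by
    intro qh hqh
    have h := hpiL2orth (dvg uh) qh hqh
    rw [inner_sub_left, ← hw] at h
    have c1 := real_inner_comm qh (dvg uh)
    have c2 := real_inner_comm qh w
    linarith
  -- from the second scheme equation: ⟪qh, w⟫ = (1/lam) ⟪ph, qh⟫ for qh ∈ Qh
  have hph2 : ∀ qh ∈ Qh, ⟪ qh, w ⟫ = (1 / lam) * ⟪ ph, qh ⟫ := by
    intro qh hqh
    have h2 := hscheme2 qh hqh
    have h3 := hproj qh hqh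
    linarith
  -- deduce ph = lam • w
  have hphw : ph = lam • w := by
    have hmem : w - (1 / lam) • ph ∈ Qh :=
      Qh.sub_mem hwQh (Qh.smul_mem _ hph)
    have hzero : ⟪ w - (1/lam) • ph, w - (1/lam) • ph ⟫ = 0 := by
      rw [inner_sub_right, real_inner_smul_right]
      have h5 := hph2 _ hmem
      rw [show (inner ℝ ph (w - (1/lam) • ph) : ℝ) = inner ℝ (w - (1/lam) • ph) ph from real_inner_comm _ _] at h5
      linarith
    have h0 : w - (1/lam) • ph = 0 := by
      have := inner_self_eq_zero (𝕜 := ℝ) (x := w - (1/lam) • ph)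
      exact this.mp hzero
    have : w = (1/lam) • ph := by
      have := sub_eq_zero.mp h0
      exact this
    rw [this, smul_smul]
    field_simp
    rw [one_smul]
  -- compute ⟪ph, dvg uh⟫ = lam ⟪w, w⟫
  have hphduh : ⟪ ph, dvg uh ⟫ = lam * ⟪ w, w ⟫ := by
    rw [hproj ph hph, hphw, real_inner_smul_left]
  -- compute the RHS
  have hd : dvgW (piDiv uh) ∈ Qh := hrange uh huh
  have hF : F (piDiv uh) = -⟪ piL2 φ, w ⟫ := by
    rw [hgrad _ (htrace uh huh)]
    have h1 : ⟪ φ, dvgW (piDiv uh) ⟫ = ⟪ piL2 φ, dvgW (piDiv uh) ⟫ := by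
      have h := hpiL2orth φ _ hd
      rw [inner_sub_left] at h
      linarith
    rw [h1, hcomm uh huh _ (hpiL2mem φ), hproj _ (hpiL2mem φ)]
  -- main identity
  have hkey := hscheme1 uh huh
  rw [hphduh, hF] at hkey
  refine ⟨hkey, ?_⟩
  -- inequality
  have hcs : -⟪ piL2 φ, w ⟫ ≤ ‖piL2 φ‖ * ‖w‖ := by
    have := abs_real_inner_le_norm (piL2 φ) w
    have := neg_abs_le (⟪ piL2 φ, w ⟫)
    linarith
  have hnorm : ‖piL2 φ‖ ≤ ‖φ‖ := by
    have horth : ⟪ φ - piL2 φ, piL2 φ ⟫ = 0 := hpiL2orth φ _ (hpiL2mem φ)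
    have hpyth : ‖(φ - piL2 φ) + piL2 φ‖ ^ 2
        = ‖φ - piL2 φ‖ ^ 2 + ‖piL2 φ‖ ^ 2 := by
      rw [norm_add_sq_real, horth]; ring
    have heq : (φ - piL2 φ) + piL2 φ = φ := by abel
    rw [heq] at hpyth
    nlinarith [norm_nonneg (φ - piL2 φ), norm_nonneg φ, norm_nonneg (piL2 φ)]
  have h1 : ⟪ eps uh, eps uh ⟫ = ‖eps uh‖ ^ 2 := real_inner_self_eq_norm_sq _
  have h2 : ⟪ w, w ⟫ = ‖w‖ ^ 2 := real_inner_self_eq_norm_sq _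
  rw [h1, h2] at hkey
  have : ‖piL2 φ‖ * ‖w‖ ≤ ‖φ‖ * ‖w‖ :=
    mul_le_mul_of_nonneg_right hnorm (norm_nonneg _)
  linarith
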